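/- If T_1, …, T_n are mutually independent and the family {F_θ} satisfies the MLR assumption, then Procedure 2 (the directional fixed sequence procedure with constant critical value α at every step) satisfies mdFWER ≤ α for every n and every configuration of parameters θ_1,…,θ_n ∈ ℝ. -/

import Mathlib

open MeasureTheory ProbabilityTheory
open Set Filter Topology

lemma aux_prod_int_le {g h : ℝ → ℝ}
    {A B : Set ℝ} (hA : MeasurableSet A) (hB : MeasurableSet B)
    (hgA : IntegrableOn g A) (hhA : IntegrableOn h A)
    (hgB : IntegrableOn g B) (hhB : IntegrableOn h B)
    (hpt : ∀ t ∈ A, ∀ s ∈ B, g t * h s ≤ h t * g s) :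
    (∫ t in A, g t) * (∫ s in B, h s) ≤ (∫ t in A, h t) * (∫ s in B, g s) := by
  rw [← setIntegral_prod_mul (μ := volume) (ν := volume) g h A B,
      ← setIntegral_prod_mul (μ := volume) (ν := volume) h g A B]
  have hABm : MeasurableSet (A ×ˢ B) := hA.prod hB
  have h1 : IntegrableOn (fun z : ℝ × ℝ => g z.1 * h z.2) (A ×ˢ B) (volume.prod volume) := by
    rw [IntegrableOn, ← Measure.prod_restrict]
    exact hgA.mul_prod hhB
  have h2 : IntegrableOn (fun z : ℝ × ℝ => h z.1 * g z.2) (A ×ˢ B) (volume.prod volume) := by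
    rw [IntegrableOn, ← Measure.prod_restrict]
    exact hhA.mul_prod hgB
  refine setIntegral_mono_on h1 h2 hABm ?_
  rintro ⟨t, s⟩ hz
  exact hpt t hz.1 s hz.2

lemma tele (α : ℝ) (p d : ℕ → ℝ) (hp0 : ∀ k, 0 ≤ p k) (hp1 : ∀ k, p k ≤ 1)
    (hd : ∀ k, 0 ≤ d k) (hkey : ∀ k, d k ≤ α * (1 - p k)) :
    ∀ m, ∑ i ∈ Finset.range m, d i * ∏ j ∈ Finset.range i, p j
      ≤ α * (1 - ∏ j ∈ Finset.range m, p j) := by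
  intro m
  induction m with
  | zero => simp
  | succ m ih =>
    rw [Finset.sum_range_succ, Finset.prod_range_succ]
    have hQ0 : 0 ≤ ∏ j ∈ Finset.range m, p j := Finset.prod_nonneg fun j _ => hp0 j
    have hQ1 : ∏ j ∈ Finset.range m, p j ≤ 1 :=
      Finset.prod_le_one (fun j _ => hp0 j) (fun j _ => hp1 j)
    have h1 : d m * ∏ j ∈ Finset.range m, p j ≤ α * (1 - p m) * ∏ j ∈ Finset.range m, p j :=
      mul_le_mul_of_nonneg_right (hkey m) hQ0
    nlinarith [hkey m, hd m, hp0 m, hp1 m]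

lemma aux_fin_prod {n : ℕ} (p : Fin n → ℝ) (pN : ℕ → ℝ)
    (h : ∀ (k : ℕ) (hk : k < n), pN k = p ⟨k, hk⟩) (i : Fin n) :
    ∏ j ∈ Finset.Iio i, p j = ∏ k ∈ Finset.range i.val, pN k := by
  refine Finset.prod_bij' (fun (j : Fin n) (_ : j ∈ Finset.Iio i) => j.val)
    (fun k hk => (⟨k, lt_trans (Finset.mem_range.mp hk) i.isLt⟩ : Fin n))
    (fun a ha => ?_) (fun k hk => ?_) (fun a ha => ?_) (fun k hk => ?_)
    (fun a ha => (h a.val a.isLt).symm)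
  · have := Finset.mem_Iio.mp ha
    simpa [Finset.mem_range] using this
  · have := Finset.mem_range.mp hk
    simp only [Finset.mem_Iio]
    exact Fin.mk_lt_of_lt_val this
  · simp
  · rfl

lemma aux_iUnion_Iic : (⋃ k : ℕ, Iic ((k : ℝ))) = univ := by
  ext x; simp only [mem_iUnion, mem_Iic, mem_univ, iff_true]
  exact exists_nat_ge x

lemma aux_iInter_Iic : (⋂ k : ℕ, Iic (-(k : ℝ))) = (∅ : Set ℝ) := by
  ext x; simp only [mem_iInter, mem_Iic, mem_empty_iff_false, iff_false, not_forall, not_le]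
  obtain ⟨k, hk⟩ := exists_nat_gt (-x)
  exact ⟨k, by linarith⟩

lemma aux_integrable {g : ℝ → ℝ} (hm : Measurable g) (hnn : ∀ x, 0 ≤ g x)
    (hint : ∀ x : ℝ, IntegrableOn g (Iic x))
    (hbd : ∀ x : ℝ, ∫ t in Iic x, g t ≤ 1) : Integrable g := by
  refine ⟨hm.aestronglyMeasurable, ?_⟩
  have hrw : ∀ᵐ a ∂(volume : Measure ℝ), ‖g a‖ₑ = ENNReal.ofReal (g a) :=
    Eventually.of_forall fun a => Real.enorm_eq_ofReal (hnn a)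
  rw [HasFiniteIntegral, lintegral_congr_ae hrw]
  set μg := (volume : Measure ℝ).withDensity (fun x => ENNReal.ofReal (g x)) with hμg
  have hIic : ∀ x : ℝ, μg (Iic x) = ENNReal.ofReal (∫ t in Iic x, g t) := by
    intro x
    rw [hμg, withDensity_apply _ measurableSet_Iic,
      ← ofReal_integral_eq_lintegral_ofReal (hint x) (Eventually.of_forall fun a => hnn a)]
  have hmono : Monotone (fun k : ℕ => Iic ((k : ℝ))) := fun a b hab =>
    Iic_subset_Iic.mpr (by exact_mod_cast hab)
  have huniv : μg univ ≤ 1 := by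
    rw [← aux_iUnion_Iic, hmono.measure_iUnion]
    refine iSup_le fun k => ?_
    rw [hIic]
    calc ENNReal.ofReal (∫ t in Iic ((k : ℝ)), g t) ≤ ENNReal.ofReal 1 :=
          ENNReal.ofReal_le_ofReal (hbd _)
      _ = 1 := ENNReal.ofReal_one
  have hres : (∫⁻ a, ENNReal.ofReal (g a)) = μg univ := by
    rw [hμg, withDensity_apply _ MeasurableSet.univ, Measure.restrict_univ]
  rw [hres]
  exact lt_of_le_of_lt huniv ENNReal.one_lt_top

lemma aux_tendsto_int_top {g : ℝ → ℝ} (hg : Integrable g) :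
    Tendsto (fun k : ℕ => ∫ t in Iic ((k : ℝ)), g t) atTop (𝓝 (∫ t, g t)) := by
  have hmono : Monotone (fun k : ℕ => Iic ((k : ℝ))) := fun a b hab =>
    Iic_subset_Iic.mpr (by exact_mod_cast hab)
  have := tendsto_setIntegral_of_monotone (fun k : ℕ => measurableSet_Iic) hmono
    (by rw [aux_iUnion_Iic]; exact hg.integrableOn)
  rwa [aux_iUnion_Iic, setIntegral_univ] at this

lemma aux_tendsto_int_bot {g : ℝ → ℝ} (hg : Integrable g) :
    Tendsto (fun k : ℕ => ∫ t in Iic (-(k : ℝ)), g t) atTop (𝓝 0) := by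
  have hanti : Antitone (fun k : ℕ => Iic (-(k : ℝ))) := fun a b hab =>
    Iic_subset_Iic.mpr (by simp; exact_mod_cast hab)
  have := tendsto_setIntegral_of_antitone (fun k : ℕ => measurableSet_Iic) hanti
    ⟨0, hg.integrableOn⟩
  rwa [aux_iInter_Iic, Measure.restrict_empty, integral_zero_measure] at this


/-- Theorem 2: Under mutual independence of T₁,…,T_n and the MLR
assumption, Procedure 2 (constant critical value α) satisfies mdFWER ≤ α for every n
and every configuration of parameters. -/
theorem procedure2_controls_mdFWER_indep_MLR
    {Ω : Type*} [MeasurableSpace Ω] (Pr : Measure Ω) [IsProbabilityMeasure Pr]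
    (F : ℝ → ℝ → ℝ)
    (hFcont : ∀ θ, Continuous (F θ))
    (hFmono : ∀ θ, Monotone (F θ))
    (hF0strict : StrictMono (F 0))
    (hFsym : ∀ x : ℝ, F 0 (-x) = 1 - F 0 x)
    (hstoch : ∀ θ θ' : ℝ, θ ≤ θ' → ∀ x, F θ' x ≤ F θ x)
    -- MLR assumption: each F_θ has a density f_θ and likelihood ratios are monotone
    (f : ℝ → ℝ → ℝ)
    (hf_nonneg : ∀ θ x, 0 ≤ f θ x)
    (hf_meas : ∀ θ, Measurable (f θ))
    (hf_cdf : ∀ θ x, F θ x = ∫ t in Set.Iic x, f θ t)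
    (hMLR : ∀ θ θ' : ℝ, θ < θ' → ∀ x₁ x₂ : ℝ, x₁ < x₂ →
      f θ' x₁ * f θ x₂ ≤ f θ' x₂ * f θ x₁)
    (n : ℕ) (θ : Fin n → ℝ) (T : Fin n → Ω → ℝ)
    (hT : ∀ i, Measurable (T i))
    (hcdf : ∀ i x, (Pr {ω | T i ω ≤ x}).toReal = F (θ i) x)
    (hindep : iIndepFun T Pr)
    (α : ℝ) (hα : α ∈ Set.Ioo (0 : ℝ) 1) :
    (Pr {ω | ∃ i : Fin n,
        (∀ j : Fin n, j ≤ i →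
          2 * min (F 0 (T j ω)) (1 - F 0 (T j ω)) ≤ α) ∧
        (θ i = 0 ∨ (θ i ≠ 0 ∧ θ i * T i ω < 0))}).toReal ≤ α := by
  classical
  obtain ⟨hα0, hα1⟩ := hα
  have hFnn : ∀ ϑ x, 0 ≤ F ϑ x := fun ϑ x => by
    rw [hf_cdf]
    exact setIntegral_nonneg measurableSet_Iic fun t _ => hf_nonneg ϑ t
  have hF00 : F 0 0 = 1 / 2 := by have := hFsym 0; rw [neg_zero] at this; linarith
  have hF0le1 : ∀ x, F 0 x ≤ 1 := fun x => by
    have h1 := hFsym x; have h2 := hFnn 0 (-x); linarith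
  have hf0int : ∀ x : ℝ, IntegrableOn (f 0) (Set.Iic x) := by
    intro x; by_contra hx
    have h1 : F 0 x = 0 := by rw [hf_cdf]; exact integral_undef hx
    have h2 := hF0strict (show x - 1 < x by linarith)
    have h3 := hFnn 0 (x - 1)
    linarith
  have hf0full : Integrable (f 0) :=
    aux_integrable (hf_meas 0) (hf_nonneg 0) hf0int
      (fun x => by rw [← hf_cdf]; exact hF0le1 x)
  have hF0bot : Tendsto (fun k : ℕ => F 0 (-(k : ℝ))) atTop (𝓝 0) :=
    (aux_tendsto_int_bot hf0full).congr fun k => (hf_cdf 0 _).symm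
  have hf0tot : (∫ t, f 0 t) = 1 := by
    have h1 : Tendsto (fun k : ℕ => F 0 ((k : ℝ))) atTop (𝓝 (∫ t, f 0 t)) :=
      (aux_tendsto_int_top hf0full).congr fun k => (hf_cdf 0 _).symm
    have h2 : Tendsto (fun k : ℕ => F 0 ((k : ℝ))) atTop (𝓝 1) := by
      have h3 : ∀ k : ℕ, F 0 ((k : ℝ)) = 1 - F 0 (-(k : ℝ)) := fun k => by
        have := hFsym (-(k : ℝ)); rw [neg_neg] at this; linarith
      have h4 : Tendsto (fun k : ℕ => 1 - F 0 (-(k : ℝ))) atTop (𝓝 (1 - 0)) :=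
        tendsto_const_nhds.sub hF0bot
      rw [sub_zero] at h4
      exact h4.congr fun k => (h3 k).symm
    exact tendsto_nhds_unique h1 h2
  -- critical constants
  obtain ⟨c₁, hFc₁, hc₁0⟩ : ∃ c₁ : ℝ, F 0 c₁ = α / 2 ∧ c₁ < 0 := by
    have h2 : ∀ᶠ k : ℕ in atTop, F 0 (-(k : ℝ)) < α / 2 :=
      hF0bot.eventually_lt_const (by linarith)
    obtain ⟨k, hk⟩ := h2.exists
    have hmem : α / 2 ∈ Icc (F 0 (-(k : ℝ))) (F 0 0) := ⟨hk.le, by rw [hF00]; linarith⟩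
    have hsub := intermediate_value_Icc (show -(k : ℝ) ≤ 0 from neg_nonpos.mpr (Nat.cast_nonneg k)) (hFcont 0).continuousOn
    obtain ⟨c₁, _, hc₁⟩ := hsub hmem
    refine ⟨c₁, hc₁, ?_⟩
    by_contra hge
    have : F 0 0 ≤ F 0 c₁ := hF0strict.monotone (not_lt.mp hge)
    rw [hF00, hc₁] at this; linarith
  set c₂ : ℝ := -c₁ with hc₂def
  have hc₂0 : 0 < c₂ := by rw [hc₂def]; linarith
  have hFc₂ : F 0 c₂ = 1 - α / 2 := by rw [hc₂def, hFsym, hFc₁]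
  have hc₁₂ : c₁ < c₂ := lt_trans hc₁0 hc₂0
  -- per-index integrability and total mass
  have hθle1 : ∀ (i : Fin n) x, F (θ i) x ≤ 1 := fun i x => by
    rw [← hcdf i x]
    exact ENNReal.toReal_mono ENNReal.one_ne_top prob_le_one |>.trans_eq ENNReal.toReal_one
  have hθint : ∀ (i : Fin n) (x : ℝ), IntegrableOn (f (θ i)) (Set.Iic x) := by
    intro i x; by_contra hx
    have hzero : ∀ y, x ≤ y → Pr {ω | T i ω ≤ y} = 0 := by
      intro y hy
      have hni : ¬ IntegrableOn (f (θ i)) (Set.Iic y) :=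
        fun h => hx (h.mono_set (Iic_subset_Iic.mpr hy))
      have h1 : F (θ i) y = 0 := by rw [hf_cdf]; exact integral_undef hni
      have h2 := hcdf i y
      rw [h1] at h2
      exact ((ENNReal.toReal_eq_zero_iff _).mp h2).resolve_right (measure_ne_top Pr _)
    have huniv : (univ : Set Ω) ⊆ ⋃ k : ℕ, {ω | T i ω ≤ x + k} := by
      intro ω _
      obtain ⟨k, hk⟩ := exists_nat_ge (T i ω - x)
      exact mem_iUnion.mpr ⟨k, by simp only [mem_setOf_eq]; linarith⟩
    have h1 : (1 : ENNReal) ≤ 0 := by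
      calc (1 : ENNReal) = Pr univ := measure_univ.symm
        _ ≤ ∑' k : ℕ, Pr {ω | T i ω ≤ x + k} :=
            le_trans (measure_mono huniv) (measure_iUnion_le _)
        _ = 0 := ENNReal.tsum_eq_zero.mpr fun k =>
            hzero (x + k) (le_add_of_nonneg_right (Nat.cast_nonneg k))
    simp at h1
  have hθfull : ∀ i, Integrable (f (θ i)) := fun i =>
    aux_integrable (hf_meas _) (hf_nonneg _) (hθint i)
      (fun x => by rw [← hf_cdf]; exact hθle1 i x)
  have hθtot : ∀ i, (∫ t, f (θ i) t) = 1 := by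
    intro i
    have h1 : Tendsto (fun k : ℕ => F (θ i) ((k : ℝ))) atTop (𝓝 (∫ t, f (θ i) t)) :=
      (aux_tendsto_int_top (hθfull i)).congr fun k => (hf_cdf _ _).symm
    have hmono : Monotone (fun k : ℕ => {ω | T i ω ≤ (k : ℝ)}) := by
      intro a b hab ω h
      simp only [mem_setOf_eq] at *
      exact le_trans h (by exact_mod_cast hab)
    have hun : (⋃ k : ℕ, {ω | T i ω ≤ (k : ℝ)}) = univ := by
      ext ω; simp only [mem_iUnion, mem_setOf_eq, mem_univ, iff_true]
      exact exists_nat_ge (T i ω)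
    have h2 := tendsto_measure_iUnion_atTop (μ := Pr) hmono
    rw [hun] at h2
    have h3 := (ENNReal.tendsto_toReal (measure_ne_top Pr univ)).comp h2
    have h4 : Tendsto (fun k : ℕ => F (θ i) ((k : ℝ))) atTop (𝓝 1) := by
      have : (Pr univ).toReal = 1 := by simp
      rw [← this]
      exact h3.congr fun k => by simp only [Function.comp_apply]; exact hcdf i _
    exact tendsto_nhds_unique h1 h4
  -- probabilities of half-lines
  have ePrIic : ∀ (i : Fin n) x, (Pr (T i ⁻¹' Set.Iic x)).toReal = F (θ i) x := fun i x => hcdf i x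
  have ePrIio : ∀ (i : Fin n) x, (Pr (T i ⁻¹' Set.Iio x)).toReal = F (θ i) x := by
    intro i x
    have hseq : Tendsto (fun k : ℕ => x - 1 / ((k : ℝ) + 1)) atTop (𝓝 x) := by
      have h0 : Tendsto (fun k : ℕ => 1 / ((k : ℝ) + 1)) atTop (𝓝 0) := tendsto_one_div_add_atTop_nhds_zero_nat
      have h1 := (tendsto_const_nhds : Tendsto (fun _ : ℕ => x) atTop (𝓝 x)).sub h0
      rw [sub_zero] at h1
      exact h1
    have hmono : Monotone (fun k : ℕ => {ω | T i ω ≤ x - 1 / ((k : ℝ) + 1)}) := by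
      intro a b hab ω h
      simp only [mem_setOf_eq] at *
      have hle : 1 / ((b : ℝ) + 1) ≤ 1 / ((a : ℝ) + 1) := by
        apply one_div_le_one_div_of_le (by positivity)
        exact_mod_cast add_le_add_left (Nat.cast_le.mpr hab) 1
      linarith
    have hun : (⋃ k : ℕ, {ω | T i ω ≤ x - 1 / ((k : ℝ) + 1)}) = T i ⁻¹' Set.Iio x := by
      ext ω
      simp only [mem_iUnion, mem_setOf_eq, mem_preimage, mem_Iio]
      constructor
      · rintro ⟨k, hk⟩
        have : 0 < 1 / ((k : ℝ) + 1) := by positivity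
        linarith
      · intro h
        obtain ⟨k, hk⟩ := exists_nat_one_div_lt (show 0 < x - T i ω by linarith)
        exact ⟨k, by linarith⟩
    have h2 := tendsto_measure_iUnion_atTop (μ := Pr) hmono
    rw [hun] at h2
    have h3 := (ENNReal.tendsto_toReal (measure_ne_top Pr _)).comp h2
    have h4 : Tendsto (fun k : ℕ => F (θ i) (x - 1 / ((k : ℝ) + 1))) atTop (𝓝 (F (θ i) x)) :=
      ((hFcont (θ i)).tendsto x).comp hseq
    refine tendsto_nhds_unique ?_ h4
    exact h3.congr fun k => by simp only [Function.comp_apply]; exact hcdf i _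
  have ePrIci : ∀ (i : Fin n) x, (Pr (T i ⁻¹' Set.Ici x)).toReal = 1 - F (θ i) x := by
    intro i x
    have h1 : T i ⁻¹' Set.Ici x = (T i ⁻¹' Set.Iio x)ᶜ := by
      rw [← Set.preimage_compl, Set.compl_Iio]
    rw [h1, prob_compl_eq_one_sub (hT i measurableSet_Iio),
      ENNReal.toReal_sub_of_le prob_le_one ENNReal.one_ne_top, ENNReal.toReal_one, ePrIio]
  -- the error / correct-rejection sets
  set D : Fin n → Set ℝ := fun i =>
    if θ i = 0 then Set.Iic c₁ ∪ Set.Ici c₂ else if 0 < θ i then Set.Iic c₁ else Set.Ici c₂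
    with hD
  set R : Fin n → Set ℝ := fun i =>
    if θ i = 0 then (∅ : Set ℝ) else if 0 < θ i then Set.Ici c₂ else Set.Iic c₁ with hR
  have hDm : ∀ i, MeasurableSet (D i) := by
    intro i; rw [hD]; dsimp only
    split_ifs
    · exact measurableSet_Iic.union measurableSet_Ici
    · exact measurableSet_Iic
    · exact measurableSet_Ici
  have hRm : ∀ i, MeasurableSet (R i) := by
    intro i; rw [hR]; dsimp only
    split_ifs
    · exact MeasurableSet.empty
    · exact measurableSet_Ici
    · exact measurableSet_Iic
  set d : Fin n → ℝ := fun i => (Pr (T i ⁻¹' D i)).toReal with hd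
  set p : Fin n → ℝ := fun i => (Pr (T i ⁻¹' R i)).toReal with hp
  have hsplitInt : ∀ (g : ℝ → ℝ), IntegrableOn g (Set.Iic c₂) →
      ∫ t in Set.Ioc c₁ c₂, g t = (∫ t in Set.Iic c₂, g t) - ∫ t in Set.Iic c₁, g t := by
    intro g hg
    have hu : Set.Iic c₁ ∪ Set.Ioc c₁ c₂ = Set.Iic c₂ := Set.Iic_union_Ioc_eq_Iic hc₁₂.le
    have hdisj : Disjoint (Set.Iic c₁) (Set.Ioc c₁ c₂) := Set.Iic_disjoint_Ioc le_rfl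
    have h2 := setIntegral_union hdisj measurableSet_Ioc
      (hg.mono_set (hu ▸ subset_union_left)) (hg.mono_set (hu ▸ subset_union_right))
    rw [hu] at h2
    linarith
  have hIoiInt : ∀ (g : ℝ → ℝ), Integrable g →
      ∫ t in Set.Ioi c₂, g t = (∫ t, g t) - ∫ t in Set.Iic c₂, g t := by
    intro g hg
    have h2 := integral_add_compl measurableSet_Iic hg (s := Set.Iic c₂)
    rw [Set.compl_Iic] at h2
    linarith
  -- key per-index inequality
  have hkey : ∀ i : Fin n, d i ≤ α * (1 - p i) := by
    intro i
    rcases lt_trichotomy (θ i) 0 with hθi | hθi | hθi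
    · -- θ i < 0
      have hDi : D i = Set.Ici c₂ := by rw [hD]; simp [hθi.ne, not_lt.mpr hθi.le]
      have hRi : R i = Set.Iic c₁ := by rw [hR]; simp [hθi.ne, not_lt.mpr hθi.le]
      have hdv : d i = 1 - F (θ i) c₂ := by rw [hd]; dsimp only; rw [hDi, ePrIci]
      have hpv : p i = F (θ i) c₁ := by rw [hp]; dsimp only; rw [hRi, ePrIic]
      have hprod := aux_prod_int_le (g := f (θ i)) (h := f 0)
        (A := Set.Ioi c₂) (B := Set.Ioc c₁ c₂) measurableSet_Ioi measurableSet_Ioc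
        ((hθfull i).integrableOn) (hf0full.integrableOn)
        ((hθint i c₂).mono_set Set.Ioc_subset_Iic_self)
        ((hf0int c₂).mono_set Set.Ioc_subset_Iic_self)
        (by
          intro t ht s hs
          have hst : s < t := lt_of_le_of_lt hs.2 ht
          have := hMLR (θ i) 0 hθi s t hst
          nlinarith [this])
      rw [hIoiInt _ (hθfull i), hIoiInt _ hf0full, hsplitInt _ (hθint i c₂),
        hsplitInt _ (hf0int c₂), hθtot i, hf0tot, ← hf_cdf, ← hf_cdf, ← hf_cdf, ← hf_cdf,
        hFc₁, hFc₂] at hprod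
      have hm1 : F (θ i) c₁ ≤ F (θ i) c₂ := hFmono _ hc₁₂.le
      have hm2 : F (θ i) c₂ ≤ 1 := hθle1 i c₂
      have hm3 : 0 ≤ F (θ i) c₁ := hFnn _ _
      rw [hdv, hpv]
      nlinarith [hprod, mul_nonneg (sub_nonneg.mpr hm2) (sub_nonneg.mpr hα1.le)]
    · -- θ i = 0
      have hDi : D i = Set.Iic c₁ ∪ Set.Ici c₂ := by rw [hD]; simp [hθi]
      have hRi : R i = (∅ : Set ℝ) := by rw [hR]; simp [hθi]
      have hpv : p i = 0 := by rw [hp]; dsimp only; rw [hRi]; simp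
      have hdisj : Disjoint (T i ⁻¹' Set.Iic c₁) (T i ⁻¹' Set.Ici c₂) := by
        refine Disjoint.preimage _ (Set.disjoint_left.mpr ?_)
        intro x hx hx'
        simp only [mem_Iic] at hx
        simp only [mem_Ici] at hx'
        linarith
      have hdv : d i = F (θ i) c₁ + (1 - F (θ i) c₂) := by
        rw [hd]; dsimp only
        rw [hDi, Set.preimage_union, measure_union hdisj (hT i measurableSet_Ici),
          ENNReal.toReal_add (measure_ne_top _ _) (measure_ne_top _ _), ePrIic, ePrIci]
      rw [hdv, hpv, hθi, hFc₁, hFc₂]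
      ring_nf
      linarith
    · -- 0 < θ i
      have hDi : D i = Set.Iic c₁ := by rw [hD]; simp [hθi.ne', hθi]
      have hRi : R i = Set.Ici c₂ := by rw [hR]; simp [hθi.ne', hθi]
      have hdv : d i = F (θ i) c₁ := by rw [hd]; dsimp only; rw [hDi, ePrIic]
      have hpv : p i = 1 - F (θ i) c₂ := by rw [hp]; dsimp only; rw [hRi, ePrIci]
      have hprod := aux_prod_int_le (g := f (θ i)) (h := f 0)
        (A := Set.Iic c₁) (B := Set.Ioc c₁ c₂) measurableSet_Iic measurableSet_Ioc
        (hθint i c₁) (hf0int c₁)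
        ((hθint i c₂).mono_set Set.Ioc_subset_Iic_self)
        ((hf0int c₂).mono_set Set.Ioc_subset_Iic_self)
        (by
          intro t ht s hs
          have hts : t < s := lt_of_le_of_lt ht hs.1
          have := hMLR 0 (θ i) hθi t s hts
          nlinarith [this])
      rw [hsplitInt _ (hθint i c₂), hsplitInt _ (hf0int c₂),
        ← hf_cdf, ← hf_cdf, ← hf_cdf, ← hf_cdf, hFc₁, hFc₂] at hprod
      have hm1 : F (θ i) c₁ ≤ F (θ i) c₂ := hFmono _ hc₁₂.le
      have hm2 : F (θ i) c₂ ≤ 1 := hθle1 i c₂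
      have hm3 : 0 ≤ F (θ i) c₁ := hFnn _ _
      rw [hdv, hpv]
      ring_nf
      nlinarith [hprod, mul_nonneg hm3 (sub_nonneg.mpr hα1.le)]
  have hp0 : ∀ i, 0 ≤ p i := fun i => ENNReal.toReal_nonneg
  have hp1 : ∀ i, p i ≤ 1 := fun i => by
    rw [hp]; dsimp only
    exact (ENNReal.toReal_mono ENNReal.one_ne_top prob_le_one).trans_eq ENNReal.toReal_one
  have hd0 : ∀ i, 0 ≤ d i := fun i => ENNReal.toReal_nonneg
  -- the covering events
  set C : Fin n → Set Ω := fun i =>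
    ⋂ j ∈ Finset.Iic i, T j ⁻¹' (if j = i then D i else R j) with hC
  -- event inclusion
  have hsub : {ω | ∃ i : Fin n,
      (∀ j : Fin n, j ≤ i → 2 * min (F 0 (T j ω)) (1 - F 0 (T j ω)) ≤ α) ∧
      (θ i = 0 ∨ (θ i ≠ 0 ∧ θ i * T i ω < 0))} ⊆ ⋃ i, C i := by
    rintro ω ⟨i, hAll, herr⟩
    have hAll' : ∀ j : Fin n, j ≤ i → T j ω ≤ c₁ ∨ c₂ ≤ T j ω := by
      intro j hj
      have h := hAll j hj
      rcases le_or_gt (F 0 (T j ω)) (1 - F 0 (T j ω)) with hm | hm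
      · rw [min_eq_left hm] at h
        left
        have h2 : F 0 (T j ω) ≤ F 0 c₁ := by rw [hFc₁]; linarith
        exact hF0strict.le_iff_le.mp h2
      · rw [min_eq_right hm.le] at h
        right
        have h2 : F 0 c₂ ≤ F 0 (T j ω) := by rw [hFc₂]; linarith
        exact hF0strict.le_iff_le.mp h2
    set good : Fin n → Prop := fun i' =>
      (∀ j : Fin n, j ≤ i' → T j ω ≤ c₁ ∨ c₂ ≤ T j ω) ∧
      (θ i' = 0 ∨ (θ i' ≠ 0 ∧ θ i' * T i' ω < 0)) with hgood
    have hiGood : good i := ⟨hAll', herr⟩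
    obtain ⟨i₀, hi₀mem, hi₀min⟩ :=
      Finset.exists_min_image (Finset.univ.filter good) id
        ⟨i, Finset.mem_filter.mpr ⟨Finset.mem_univ _, hiGood⟩⟩
    have hi₀ : good i₀ := (Finset.mem_filter.mp hi₀mem).2
    refine mem_iUnion.mpr ⟨i₀, ?_⟩
    rw [hC]
    simp only [mem_iInter]
    intro j hj
    by_cases hji : j = i₀
    · subst hji
      rw [if_pos rfl]
      show T j ω ∈ D j
      rcases hi₀.2 with h0 | ⟨hne, hsign⟩
      · rw [hD]; dsimp only; rw [if_pos h0]
        rcases hi₀.1 j le_rfl with h | h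
        · exact Or.inl h
        · exact Or.inr h
      · rcases lt_trichotomy (θ j) 0 with hs | hs | hs
        · have hTpos : 0 < T j ω := by nlinarith
          rw [hD]; dsimp only; rw [if_neg hne, if_neg (not_lt.mpr hs.le)]
          rcases hi₀.1 j le_rfl with h | h
          · linarith
          · exact h
        · exact absurd hs hne
        · have hTneg : T j ω < 0 := by nlinarith
          rw [hD]; dsimp only; rw [if_neg hne, if_pos hs]
          rcases hi₀.1 j le_rfl with h | h
          · exact h
          · linarith
    · have hjle : j ≤ i₀ := Finset.mem_Iic.mp hj
      have hjlt : j < i₀ := lt_of_le_of_ne hjle hji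
      rw [if_neg hji]
      show T j ω ∈ R j
      have hnotgood : ¬ good j := by
        intro hg
        have := hi₀min j (Finset.mem_filter.mpr ⟨Finset.mem_univ _, hg⟩)
        simp only [id] at this
        exact absurd this (not_le.mpr hjlt)
      have hrej : ∀ k : Fin n, k ≤ j → T k ω ≤ c₁ ∨ c₂ ≤ T k ω :=
        fun k hk => hi₀.1 k (le_trans hk hjlt.le)
      rcases lt_trichotomy (θ j) 0 with h0 | h0 | h0
      · rw [hR]; dsimp only; rw [if_neg h0.ne, if_neg (not_lt.mpr h0.le)]
        rcases hrej j le_rfl with h | h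
        · exact h
        · exfalso
          apply hnotgood
          refine ⟨hrej, Or.inr ⟨h0.ne, ?_⟩⟩
          have : 0 < T j ω := lt_of_lt_of_le hc₂0 h
          exact mul_neg_of_neg_of_pos h0 this
      · exact absurd (hnotgood ⟨hrej, Or.inl h0⟩) not_false
      · rw [hR]; dsimp only; rw [if_neg h0.ne', if_pos h0]
        rcases hrej j le_rfl with h | h
        · exfalso
          apply hnotgood
          refine ⟨hrej, Or.inr ⟨h0.ne', ?_⟩⟩
          have : T j ω < 0 := lt_of_le_of_lt h hc₁0
          exact mul_neg_of_pos_of_neg h0 this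
        · exact h
  -- independence computation
  have hCm : ∀ i : Fin n, Pr (C i) =
      Pr (T i ⁻¹' D i) * ∏ j ∈ Finset.Iio i, Pr (T j ⁻¹' R j) := by
    intro i
    have hmeas : ∀ j : Fin n, j ∈ Finset.Iic i →
        MeasurableSet (if j = i then D i else R j) := by
      intro j _
      split_ifs
      · exact hDm i
      · exact hRm j
    have h1 := hindep.measure_inter_preimage_eq_mul (Finset.Iic i)
      (sets := fun j => if j = i then D i else R j) hmeas
    rw [hC]
    dsimp only
    rw [h1, ← Finset.Iio_insert, Finset.prod_insert (by simp)]
    rw [if_pos rfl]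
    congr 1
    refine Finset.prod_congr rfl fun j hj => ?_
    rw [if_neg (ne_of_lt (Finset.mem_Iio.mp hj))]
  -- put it together
  have hPrUnion : (Pr (⋃ i, C i)).toReal ≤ α := by
    have hle : Pr (⋃ i, C i) ≤ ∑ i, Pr (C i) := measure_iUnion_fintype_le _ _
    have hfin : (∑ i, Pr (C i)) ≠ ⊤ :=
      (ENNReal.sum_lt_top.mpr fun i _ => measure_lt_top Pr _).ne
    set pN : ℕ → ℝ := fun k => if hk : k < n then p ⟨k, hk⟩ else 1 with hpN
    set dN : ℕ → ℝ := fun k => if hk : k < n then d ⟨k, hk⟩ else 0 with hdN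
    have hteleB := tele α pN dN
      (fun k => by rw [hpN]; dsimp only; split_ifs; exacts [hp0 _, zero_le_one])
      (fun k => by rw [hpN]; dsimp only; split_ifs; exacts [hp1 _, le_rfl])
      (fun k => by rw [hdN]; dsimp only; split_ifs; exacts [hd0 _, le_rfl])
      (fun k => by
        rw [hpN, hdN]; dsimp only
        split_ifs with hk
        · exact hkey _
        · simp)
      n
    calc (Pr (⋃ i, C i)).toReal ≤ (∑ i, Pr (C i)).toReal := ENNReal.toReal_mono hfin hle
      _ = ∑ i, (Pr (C i)).toReal := ENNReal.toReal_sum fun i _ => measure_ne_top Pr _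
      _ = ∑ i : Fin n, d i * ∏ j ∈ Finset.Iio i, p j := by
          refine Finset.sum_congr rfl fun i _ => ?_
          rw [hCm i, ENNReal.toReal_mul, ENNReal.toReal_prod]
      _ = ∑ k ∈ Finset.range n, dN k * ∏ j ∈ Finset.range k, pN j := by
          rw [← Fin.sum_univ_eq_sum_range (fun k => dN k * ∏ j ∈ Finset.range k, pN j) n]
          refine Finset.sum_congr rfl fun i _ => ?_
          rw [aux_fin_prod p pN (fun k hk => by rw [hpN]; dsimp only; rw [dif_pos hk]) i]
          congr 1
          rw [hdN]; dsimp only; rw [dif_pos i.isLt]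
      _ ≤ α * (1 - ∏ j ∈ Finset.range n, pN j) := hteleB
      _ ≤ α := by
          have hQ0 : 0 ≤ ∏ j ∈ Finset.range n, pN j := Finset.prod_nonneg fun j _ => by
            rw [hpN]; dsimp only; split_ifs; exacts [hp0 _, zero_le_one]
          nlinarith
  calc (Pr _).toReal ≤ (Pr (⋃ i, C i)).toReal :=
        ENNReal.toReal_mono (measure_ne_top Pr _) (measure_mono hsub)
    _ ≤ α := hPrUnion
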